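/- If the cosets d_i·ℤ + r_i for i = 1,…,s partition ℤ (with every d_i > 1), then for every index i there exists j ≠ i such that either d_i = d_j or d_i properly divides d_j. -/
import Mathlib

open Finset Complex

/-- Geometric sum helper: if `w ≠ 1` and `w ^ n = 1` then the geometric sum vanishes. -/
lemma geom_sum_zero_of_pow_eq_one {w : ℂ} {n : ℕ} (hw : w ≠ 1) (hpow : w ^ n = 1) :
    ∑ t ∈ Finset.range n, w ^ t = 0 := by
  rw [geom_sum_eq hw, hpow, sub_self, zero_div]

/-- In an exact covering system of `ℤ`, every modulus equals, or properly divides,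
some other modulus. -/
theorem erdos_modulus_divides_another
    (s : ℕ) (hs : 2 ≤ s) (d : Fin s → ℕ) (r : Fin s → ℤ)
    (hd : ∀ i, 1 < d i)
    (hpart : ∀ x : ℤ, ∃! i : Fin s, (d i : ℤ) ∣ x - r i) :
    ∀ i : Fin s, ∃ j : Fin s, j ≠ i ∧ (d i = d j ∨ (d i ∣ d j ∧ d i ≠ d j)) := by
  intro i
  suffices h : ∃ j : Fin s, j ≠ i ∧ d i ∣ d j by
    obtain ⟨j, hji, hdvd⟩ := h
    refine ⟨j, hji, ?_⟩
    by_cases he : d i = d j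
    · exact Or.inl he
    · exact Or.inr ⟨hdvd, he⟩
  by_contra hcon
  push_neg at hcon
  -- setup
  have hdpos : ∀ j, 0 < d j := fun j => lt_trans one_pos (hd j)
  set N : ℕ := ∏ j, d j with hN
  have hdvdN : ∀ j, d j ∣ N := fun j => Finset.dvd_prod_of_mem d (mem_univ j)
  have hNpos : 0 < N := Finset.prod_pos fun j _ => hdpos j
  -- primitive root of unity of order `d i`
  set ζ : ℂ := Complex.exp (2 * Real.pi * Complex.I / (d i)) with hζdef
  have hζ : IsPrimitiveRoot ζ (d i) := Complex.isPrimitiveRoot_exp _ (hdpos i).ne'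
  have hζpow : ∀ n : ℕ, ζ ^ n = 1 ↔ d i ∣ n := fun n => hζ.pow_eq_one_iff_dvd n
  have hζne1 : ζ ≠ 1 := hζ.ne_one (hd i)
  have hζne0 : ζ ≠ 0 := hζ.ne_zero (hdpos i).ne'
  -- residues
  set c : Fin s → ℕ := fun j => (r j % (d j : ℤ)).toNat with hc
  have hcval : ∀ j, (c j : ℤ) = r j % (d j : ℤ) := fun j =>
    Int.toNat_of_nonneg (Int.emod_nonneg _ (by exact_mod_cast (hdpos j).ne'))
  have hclt : ∀ j, c j < d j := by
    intro j
    have h1 := Int.emod_lt_of_pos (r j) (b := (d j : ℤ)) (by exact_mod_cast hdpos j)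
    have h2 := hcval j
    have : (c j : ℤ) < (d j : ℤ) := by rw [h2]; exact h1
    exact_mod_cast this
  have hcdvd : ∀ (j : Fin s) (t : ℕ), (d j : ℤ) ∣ ((c j + d j * t : ℕ) : ℤ) - r j := by
    intro j t
    have h2 := hcval j
    have hkey : r j % (d j : ℤ) - r j = -((d j : ℤ) * (r j / d j)) := by
      rw [Int.emod_def]; ring
    have : ((c j + d j * t : ℕ) : ℤ) - r j = (r j % (d j : ℤ) - r j) + (d j : ℤ) * t := by
      push_cast [h2]; ring
    rw [this, hkey]
    exact dvd_add (Dvd.intro _ rfl).neg_right (Dvd.intro _ rfl)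
  -- the bijection between `range N` and the sigma type of classes
  have hsum : ∑ x ∈ Finset.range N, ζ ^ x
      = ∑ p ∈ (Finset.univ.sigma fun j : Fin s => Finset.range (N / d j)),
          ζ ^ (c p.1 + d p.1 * p.2) := by
    refine (Finset.sum_bij
      (fun (p : Σ j : Fin s, ℕ) (_ : p ∈ Finset.univ.sigma fun j => Finset.range (N / d j)) =>
        c p.1 + d p.1 * p.2) ?_ ?_ ?_ ?_).symm
    · -- maps into range N
      rintro ⟨j, t⟩ hp
      simp only [Finset.mem_sigma, Finset.mem_range] at hp ⊢
      have ht : t < N / d j := hp.2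
      have : c j + d j * t < d j * (t + 1) := by
        have := hclt j; nlinarith [hdpos j]
      have h2 : d j * (t + 1) ≤ d j * (N / d j) := Nat.mul_le_mul_left _ (by omega)
      have h3 : d j * (N / d j) = N := Nat.mul_div_cancel' (hdvdN j) 
      omega
    · -- injective
      rintro ⟨j, t⟩ hp ⟨j', t'⟩ hp' heq
      simp only [Finset.mem_sigma, Finset.mem_range] at hp hp'
      dsimp only at heq
      have hdj : (d j : ℤ) ∣ ((c j + d j * t : ℕ) : ℤ) - r j := hcdvd j t
      have hdj' : (d j' : ℤ) ∣ ((c j + d j * t : ℕ) : ℤ) - r j' := by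
        rw [heq]; exact hcdvd j' t'
      obtain ⟨k, hk1, hk2⟩ := hpart ((c j + d j * t : ℕ) : ℤ)
      have e1 : j = k := hk2 j hdj
      have e2 : j' = k := hk2 j' hdj'
      subst e1
      have : j = j' := e2.symm
      subst this
      have : d j * t = d j * t' := by omega
      have ht : t = t' := by
        exact Nat.eq_of_mul_eq_mul_left (hdpos j) this
      simp [ht]
    · -- surjective
      intro x hx
      simp only [Finset.mem_range] at hx
      obtain ⟨j, hj, _⟩ := hpart (x : ℤ)
      -- x ≡ r j [mod d j], so x % d j = c j
      have hmod : (x : ℤ) % (d j : ℤ) = r j % (d j : ℤ) :=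
        (Int.modEq_iff_dvd.mpr hj).symm
      have hxc : x % d j = c j := by
        have h1 : ((x % d j : ℕ) : ℤ) = (x : ℤ) % (d j : ℤ) := by push_cast; rfl
        have : ((x % d j : ℕ) : ℤ) = (c j : ℤ) := by rw [h1, hmod, hcval j]
        exact_mod_cast this
      refine ⟨⟨j, x / d j⟩, ?_, ?_⟩
      · simp only [Finset.mem_sigma, Finset.mem_range, Finset.mem_univ, true_and]
        exact Nat.div_lt_div_of_lt_of_dvd (hdvdN j) hx
      · dsimp only
        have := Nat.mod_add_div x (d j)
        omega
    · intro x hx; rfl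
  -- left side is zero
  have hzero : ∑ x ∈ Finset.range N, ζ ^ x = 0 :=
    geom_sum_zero_of_pow_eq_one hζne1 ((hζpow N).mpr (hdvdN i))
  -- rewrite the sigma sum as a sum over j of factored sums
  have hfact : ∑ p ∈ (Finset.univ.sigma fun j : Fin s => Finset.range (N / d j)),
          ζ ^ (c p.1 + d p.1 * p.2)
      = ∑ j : Fin s, ζ ^ (c j) * ∑ t ∈ Finset.range (N / d j), (ζ ^ (d j)) ^ t := by
    rw [Finset.sum_sigma]
    refine Finset.sum_congr rfl fun j _ => ?_
    rw [Finset.mul_sum]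
    refine Finset.sum_congr rfl fun t _ => ?_
    rw [pow_add, pow_mul]
  -- all terms with j ≠ i vanish
  have hvanish : ∀ j : Fin s, j ≠ i →
      ζ ^ (c j) * ∑ t ∈ Finset.range (N / d j), (ζ ^ (d j)) ^ t = 0 := by
    intro j hji
    have hw1 : ζ ^ (d j) ≠ 1 := fun h => hcon j hji ((hζpow _).mp h)
    have hwN : (ζ ^ (d j)) ^ (N / d j) = 1 := by
      rw [← pow_mul, Nat.mul_div_cancel' (hdvdN j)]
      exact (hζpow N).mpr (hdvdN i)
    rw [geom_sum_zero_of_pow_eq_one hw1 hwN, mul_zero]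
  -- so the whole sum equals the `i` term
  have hsingle : ∑ j : Fin s, ζ ^ (c j) * ∑ t ∈ Finset.range (N / d j), (ζ ^ (d j)) ^ t
      = ζ ^ (c i) * (N / d i : ℕ) := by
    rw [Finset.sum_eq_single i (fun j _ hji => hvanish j hji) (fun h => absurd (mem_univ i) h)]
    have : ζ ^ (d i) = 1 := (hζpow (d i)).mpr dvd_rfl
    simp [this]
  -- contradiction
  have hfinal : ζ ^ (c i) * (N / d i : ℕ) = 0 := by
    rw [← hsingle, ← hfact, ← hsum, hzero]
  have hquotpos : 0 < N / d i := Nat.div_pos (Nat.le_of_dvd hNpos (hdvdN i)) (hdpos i)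
  have : ((N / d i : ℕ) : ℂ) ≠ 0 := Nat.cast_ne_zero.mpr hquotpos.ne'
  exact (mul_ne_zero (pow_ne_zero _ hζne0) this) hfinal
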